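/- QT does not prove ∀x ¬(x B x): there exists a model of QT1–QT5 containing an element X with X * X = X (so X is a proper 'initial segment' of itself). -/

import Mathlib

inductive MM : Type where
  | fin : Bool → List Bool → MM
  | inf : List Nat → List Nat → MM

namespace MM

/-- prepend a letter to a normalized tag (blocks encoding; `true` letters absorbable). -/
def pL : Bool → List Nat → List Nat
  | true, [] => []
  | true, k :: t => (k+1) :: t
  | false, L => 0 :: L

def prep (w : List Bool) (L : List Nat) : List Nat := w.foldr pL L
def app (R : List Nat) (w : List Bool) : List Nat := w.foldl (fun r c => pL c r) R

def op : MM → MM → MM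
  | fin c w, fin c' w' => fin c (w ++ c' :: w')
  | fin c w, inf L R => inf (prep (c :: w) L) R
  | inf L R, fin c w => inf L (app R (c :: w))
  | inf L _, inf _ R' => inf L R'

lemma pL_inj (c : Bool) {L L' : List Nat} (h : pL c L = pL c L') : L = L' := by
  cases c <;> cases L <;> cases L' <;> simp_all [pL]

lemma pL_true_ne (L L' : List Nat) : pL true L ≠ 0 :: L' := by
  cases L <;> simp [pL]

lemma pL_true_ne_false (L L' : List Nat) : pL true L ≠ pL false L' := by
  cases L <;> simp [pL]

lemma concat_ne (w w' : List Bool) : w ++ [true] ≠ w' ++ [false] := by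
  intro h
  have := congrArg List.reverse h
  simp at this

end MM

theorem stmt_12 : ∃ (M : Type) (op : M → M → M) (a b : M),
    (∀ x y z, op (op x y) z = op x (op y z)) ∧
    (∀ x y, op x y ≠ a ∧ op x y ≠ b) ∧
    (∀ x y, (op x a = op y a → x = y) ∧ (op x b = op y b → x = y) ∧
      (op a x = op a y → x = y) ∧ (op b x = op b y → x = y)) ∧
    (∀ x y, op a x ≠ op b y ∧ op x a ≠ op y b) ∧
    (∀ x, x = a ∨ x = b ∨
      ((∃ y, op a y = x ∨ op b y = x) ∧ (∃ z, op z a = x ∨ op z b = x))) ∧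
    (∃ X, op X X = X) := by
  refine ⟨MM, MM.op, MM.fin true [], MM.fin false [], ?_, ?_, ?_, ?_, ?_, ?_⟩
  · -- associativity
    intro x y z
    cases x <;> cases y <;> cases z <;>
      simp [MM.op, MM.prep, MM.app, List.foldr_append, List.foldl_append]
  · -- products are not letters
    intro x y
    cases x <;> cases y <;> simp [MM.op]
  · -- cancellation
    intro x y
    refine ⟨?_, ?_, ?_, ?_⟩
    · cases x <;> cases y <;> simp [MM.op, MM.app, MM.prep]
      exact fun h1 h2 => ⟨h1, MM.pL_inj true h2⟩
    · cases x <;> cases y <;> simp [MM.op, MM.app, MM.prep, MM.pL]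
    · cases x <;> cases y <;> simp [MM.op, MM.app, MM.prep]
      exact fun h1 h2 => ⟨MM.pL_inj true h1, h2⟩
    · cases x <;> cases y <;> simp [MM.op, MM.app, MM.prep, MM.pL]
  · -- head/tail letters distinguish
    intro x y
    constructor
    · cases x <;> cases y <;> simp [MM.op, MM.prep, MM.app]
      exact fun h _ => MM.pL_true_ne_false _ _ h
    · cases x <;> cases y <;> simp [MM.op, MM.prep, MM.app]
      · exact fun _ => MM.pL_true_ne_false _ _
  · -- every element is a letter or decomposes on both sides
    intro x
    cases x with
    | fin c w =>
      cases w with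
      | nil => cases c
               · right; left; rfl
               · left; rfl
      | cons c' w' =>
        right; right
        constructor
        · cases c
          · exact ⟨MM.fin c' w', Or.inr (by simp [MM.op])⟩
          · exact ⟨MM.fin c' w', Or.inl (by simp [MM.op])⟩
        · rcases List.eq_nil_or_concat (c' :: w') with h | ⟨l, d, h⟩
          · simp at h
          · cases d
            · exact ⟨MM.fin c l, Or.inr (by simp [MM.op, h])⟩
            · exact ⟨MM.fin c l, Or.inl (by simp [MM.op, h])⟩
    | inf L R =>
      right; right
      constructor
      · match L with
        | [] => exact ⟨MM.inf [] R, Or.inl (by simp [MM.op, MM.prep, MM.pL])⟩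
        | 0 :: t => exact ⟨MM.inf t R, Or.inr (by simp [MM.op, MM.prep, MM.pL])⟩
        | (k+1) :: t => exact ⟨MM.inf (k :: t) R, Or.inl (by simp [MM.op, MM.prep, MM.pL])⟩
      · match R with
        | [] => exact ⟨MM.inf L [], Or.inl (by simp [MM.op, MM.app, MM.pL])⟩
        | 0 :: t => exact ⟨MM.inf L t, Or.inr (by simp [MM.op, MM.app, MM.pL])⟩
        | (k+1) :: t => exact ⟨MM.inf L (k :: t), Or.inl (by simp [MM.op, MM.app, MM.pL])⟩
  · exact ⟨MM.inf [] [], rfl⟩
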